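/- Let ABC be a triangle with incenter I, and let P be a point in the interior of the triangle satisfying ∠PBA + ∠PCA = ∠PBC + ∠PCB. Then AP ≥ AI, with equality if and only if P = I. -/

import Mathlib

open EuclideanGeometry Real

namespace Imo2006P1Aux

variable {E : Type*} [NormedAddCommGroup E] [InnerProductSpace ℝ E]

/-- A point whose first "barycentric coordinate" w.r.t. `A` over the line `BC` is positive is
strictly on the same side of `line[B,C]` as `A`. -/
lemma sSameSide_of_rep {A B C X : E} {t u : ℝ} (hA : A ∉ line[ℝ, B, C]) (ht : 0 < t)
    (hX : X = t • (A - B) + (u • (C - B) + B)) :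
    (line[ℝ, B, C]).SSameSide X A := by
  have hB : B ∈ line[ℝ, B, C] := left_mem_affineSpan_pair ℝ B C
  have hC : C ∈ line[ℝ, B, C] := right_mem_affineSpan_pair ℝ B C
  have hp₂ : u • (C - B) + B ∈ line[ℝ, B, C] := by
    have hd : C - B ∈ (line[ℝ, B, C]).direction := by
      simpa using AffineSubspace.vsub_mem_direction hC hB
    simpa using AffineSubspace.vadd_mem_of_mem_direction (Submodule.smul_mem _ u hd) hB
  have := AffineSubspace.sSameSide_smul_vsub_vadd_left hA hB hp₂ ht
  simpa [hX, vsub_eq_sub, vadd_eq_add] using this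

lemma rep₁ (b : AffineBasis (Fin 3) ℝ E) (X : E) :
    X = b.coord 0 X • (b 0 - b 1) + (b.coord 2 X • (b 2 - b 1) + b 1) := by
  have h := b.affineCombination_coord_eq_self X
  rw [Finset.univ.affineCombination_eq_weightedVSubOfPoint_vadd_of_sum_eq_one _ _
      (b.sum_coord_apply_eq_one X) (b 1)] at h
  simp only [Finset.weightedVSubOfPoint_apply, Fin.sum_univ_three, vsub_eq_sub, vadd_eq_add] at h
  conv_lhs => rw [← h]
  module

lemma rep₂ (b : AffineBasis (Fin 3) ℝ E) (X : E) :
    X = b.coord 1 X • (b 1 - b 2) + (b.coord 0 X • (b 0 - b 2) + b 2) := by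
  have h := b.affineCombination_coord_eq_self X
  rw [Finset.univ.affineCombination_eq_weightedVSubOfPoint_vadd_of_sum_eq_one _ _
      (b.sum_coord_apply_eq_one X) (b 2)] at h
  simp only [Finset.weightedVSubOfPoint_apply, Fin.sum_univ_three, vsub_eq_sub, vadd_eq_add] at h
  conv_lhs => rw [← h]
  module

lemma rep₃ (b : AffineBasis (Fin 3) ℝ E) (X : E) :
    X = b.coord 2 X • (b 2 - b 0) + (b.coord 1 X • (b 1 - b 0) + b 0) := by
  have h := b.affineCombination_coord_eq_self X
  rw [Finset.univ.affineCombination_eq_weightedVSubOfPoint_vadd_of_sum_eq_one _ _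
      (b.sum_coord_apply_eq_one X) (b 0)] at h
  simp only [Finset.weightedVSubOfPoint_apply, Fin.sum_univ_three, vsub_eq_sub, vadd_eq_add] at h
  conv_lhs => rw [← h]
  module

lemma coe_add_coe {x y z : ℝ} (hx0 : 0 < x) (hxp : x < π) (hy0 : 0 < y) (hyp : y < π)
    (hz0 : 0 < z) (hzp : z < π) (h : ((x : Real.Angle) + y) = (z : Real.Angle)) :
    x + y = z := by
  rw [← Real.Angle.coe_add, Real.Angle.angle_eq_iff_two_pi_dvd_sub] at h
  obtain ⟨k, hk⟩ := h
  have hπ : 0 < π := Real.pi_pos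
  have hk0 : k = 0 := by
    rcases lt_trichotomy k 0 with hlt | heq | hgt
    · have hk1 : k ≤ -1 := by omega
      have : (k : ℝ) ≤ -1 := by exact_mod_cast hk1
      nlinarith
    · exact heq
    · have : (1 : ℝ) ≤ (k : ℝ) := by exact_mod_cast hgt
      nlinarith
  rw [hk0] at hk
  push_cast at hk
  linarith

lemma two_zsmul_half_coe (x : ℝ) : (2 : ℤ) • ((x / 2 : ℝ) : Real.Angle) = (x : Real.Angle) := by
  rw [two_zsmul, ← Real.Angle.coe_add]
  congr 1; ring

end Imo2006P1Aux

namespace Imo2006P1Aux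

open EuclideanGeometry Real

variable {E : Type*} [NormedAddCommGroup E] [InnerProductSpace ℝ E]
  [hd2 : Fact (Module.finrank ℝ E = 2)] [Module.Oriented ℝ E (Fin 2)]

lemma angle_bounds {p q r : E} (h : (∡ p q r).sign ≠ 0) : 0 < ∠ p q r ∧ ∠ p q r < π := by
  have hpq : p ≠ q := left_ne_of_oangle_sign_ne_zero h
  have hrq : r ≠ q := right_ne_of_oangle_sign_ne_zero h
  refine ⟨lt_of_le_of_ne (angle_nonneg _ _ _) ?_, lt_of_le_of_ne (angle_le_pi _ _ _) ?_⟩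
  · intro h0
    exact h (by rw [(oangle_eq_zero_iff_angle_eq_zero hpq hrq).2 h0.symm, Real.Angle.sign_zero])
  · intro hp
    exact h (by rw [oangle_eq_pi_iff_angle_eq_pi.2 hp, Real.Angle.sign_coe_pi])

/-- Two points strictly on the same side of `line[p₁, p₂]` subtend angles of the same sign. -/
lemma sign_eq_of_sSameSide {p₁ p₂ x y : E} (h : (line[ℝ, p₁, p₂]).SSameSide x y) :
    (∡ p₁ y p₂).sign = (∡ p₁ x p₂).sign :=
  AffineSubspace.SSameSide.oangle_sign_eq (left_mem_affineSpan_pair ℝ p₁ p₂)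
    (right_mem_affineSpan_pair ℝ p₁ p₂) h

/-- Additivity of unoriented angles for a ray through the interior. -/
lemma angle_add_of_signs {p a x c : E} (h1 : (∡ a p x).sign = 1) (h2 : (∡ x p c).sign = 1)
    (h3 : (∡ a p c).sign = 1) : ∠ a p x + ∠ x p c = ∠ a p c := by
  have hap : a ≠ p := left_ne_of_oangle_sign_eq_one h1
  have hxp : x ≠ p := right_ne_of_oangle_sign_eq_one h1
  have hcp : c ≠ p := right_ne_of_oangle_sign_eq_one h2
  have hadd : ∡ a p x + ∡ x p c = ∡ a p c := oangle_add hap hxp hcp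
  rw [oangle_eq_angle_of_sign_eq_one h1, oangle_eq_angle_of_sign_eq_one h2,
    oangle_eq_angle_of_sign_eq_one h3] at hadd
  obtain ⟨u1, v1⟩ := angle_bounds (p := a) (q := p) (r := x) (by rw [h1]; decide)
  obtain ⟨u2, v2⟩ := angle_bounds (p := x) (q := p) (r := c) (by rw [h2]; decide)
  obtain ⟨u3, v3⟩ := angle_bounds (p := a) (q := p) (r := c) (by rw [h3]; decide)
  exact coe_add_coe u1 v1 u2 v2 u3 v3 hadd

/-- All the sign facts for a point `X` strictly inside triangle `ABC` (positively oriented). -/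
lemma interior_signs {A B C X : E} (hor : (∡ A B C).sign = 1)
    (h1 : (line[ℝ, B, C]).SSameSide X A) (h2 : (line[ℝ, C, A]).SSameSide X B)
    (h3 : (line[ℝ, A, B]).SSameSide X C) :
    (∡ A B X).sign = 1 ∧ (∡ X B C).sign = 1 ∧ (∡ B C X).sign = 1 ∧ (∡ X C A).sign = 1 ∧
      (∡ C A X).sign = 1 ∧ (∡ X A B).sign = 1 ∧ (∡ B X C).sign = -1 := by
  have s2 : (∡ B C A).sign = 1 := by rw [oangle_rotate_sign]; exact hor
  have s1 : (∡ C A B).sign = 1 := by rw [oangle_rotate_sign]; exact s2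
  -- from h3 : same side of AB
  have e3 : (∡ A C B).sign = (∡ A X B).sign := sign_eq_of_sSameSide h3
  have hACB : (∡ A C B).sign = -1 := by rw [← oangle_swap₁₃_sign B C A, s2]
  have hBXA : (∡ B X A).sign = 1 := by
    rw [← oangle_swap₁₃_sign A X B, ← e3, hACB]; decide
  have sB1 : (∡ A B X).sign = 1 := by rw [← oangle_rotate_sign A B X]; exact hBXA
  have sA2 : (∡ X A B).sign = 1 := by rw [← oangle_rotate_sign X A B]; exact sB1
  -- from h1 : same side of BC
  have e1 : (∡ B A C).sign = (∡ B X C).sign := sign_eq_of_sSameSide h1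
  have hBAC : (∡ B A C).sign = -1 := by rw [← oangle_swap₁₃_sign C A B, s1]
  have sBXC : (∡ B X C).sign = -1 := by rw [← e1]; exact hBAC
  have sC1 : (∡ B C X).sign = 1 := by
    rw [← oangle_rotate_sign B C X, ← oangle_swap₁₃_sign B X C, sBXC]; decide
  have sB2 : (∡ X B C).sign = 1 := by rw [← oangle_rotate_sign X B C]; exact sC1
  -- from h2 : same side of CA
  have e2 : (∡ C B A).sign = (∡ C X A).sign := sign_eq_of_sSameSide h2
  have hCBA : (∡ C B A).sign = -1 := by rw [← oangle_swap₁₃_sign A B C, hor]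
  have hAXC : (∡ A X C).sign = 1 := by
    rw [← oangle_swap₁₃_sign C X A, ← e2, hCBA]; decide
  have sC2 : (∡ X C A).sign = 1 := by rw [oangle_rotate_sign A X C]; exact hAXC
  have sA1 : (∡ C A X).sign = 1 := by rw [← oangle_rotate_sign C A X]; exact hAXC
  exact ⟨sB1, sB2, sC1, sC2, sA1, sA2, sBXC⟩

end Imo2006P1Aux

namespace Imo2006P1Aux

open EuclideanGeometry Real Affine

variable {E : Type*} [NormedAddCommGroup E] [InnerProductSpace ℝ E]
  [hd2 : Fact (Module.finrank ℝ E = 2)] [Module.Oriented ℝ E (Fin 2)]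

set_option maxHeartbeats 1000000 in
theorem aux (A B C I P : E)
    (hABC : AffineIndependent ℝ ![A, B, C])
    (hor : (∡ A B C).sign = 1)
    (hIin : I ∈ interior (convexHull ℝ ({A, B, C} : Set E)))
    (hIA : ∠ B A I = ∠ I A C) (hIB : ∠ A B I = ∠ I B C) (hIC : ∠ B C I = ∠ I C A)
    (hPin : P ∈ interior (convexHull ℝ ({A, B, C} : Set E)))
    (hang : ∠ P B A + ∠ P C A = ∠ P B C + ∠ P C B) :
    dist A I ≤ dist A P ∧ (dist A P = dist A I ↔ P = I) := by
  haveI : FiniteDimensional ℝ E := FiniteDimensional.of_finrank_eq_succ (n := 1) hd2.out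
  have hncol : ¬Collinear ℝ ({A, B, C} : Set E) := affineIndependent_iff_not_collinear_set.mp hABC
  -- an affine basis from the triangle
  have htop : affineSpan ℝ (Set.range ![A, B, C]) = ⊤ := by
    rw [hABC.affineSpan_eq_top_iff_card_eq_finrank_add_one]
    simp [hd2.out]
  let b : AffineBasis (Fin 3) ℝ E := ⟨![A, B, C], hABC, htop⟩
  have hb0 : b 0 = A := rfl
  have hb1 : b 1 = B := rfl
  have hb2 : b 2 = C := rfl
  have hrange : Set.range ⇑b = ({A, B, C} : Set E) := by
    ext x
    constructor
    · rintro ⟨i, rfl⟩; fin_cases i <;> simp [hb0, hb1, hb2]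
    · rintro (rfl | rfl | rfl)
      exacts [⟨0, rfl⟩, ⟨1, rfl⟩, ⟨2, rfl⟩]
  have hint : interior (convexHull ℝ ({A, B, C} : Set E)) = {x | ∀ i, 0 < b.coord i x} := by
    rw [← hrange, b.interior_convexHull]
  rw [hint] at hIin hPin
  -- vertices not on opposite lines
  have hAnm : A ∉ line[ℝ, B, C] := fun h =>
    hncol (collinear_insert_of_mem_affineSpan_pair h)
  have hBnm : B ∉ line[ℝ, C, A] := fun h => by
    have := collinear_insert_of_mem_affineSpan_pair h
    exact hncol (by rwa [show ({B, C, A} : Set E) = {A, B, C} by ext x; simp; tauto] at this)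
  have hCnm : C ∉ line[ℝ, A, B] := fun h => by
    have := collinear_insert_of_mem_affineSpan_pair h
    exact hncol (by rwa [show ({C, A, B} : Set E) = {A, B, C} by ext x; simp; tauto] at this)
  -- strict same-side facts for an interior point
  have side1 : ∀ X : E, (∀ i, 0 < b.coord i X) → (line[ℝ, B, C]).SSameSide X A := fun X hX =>
    sSameSide_of_rep hAnm (hX 0) (by simpa [hb0, hb1, hb2] using rep₁ b X)
  have side2 : ∀ X : E, (∀ i, 0 < b.coord i X) → (line[ℝ, C, A]).SSameSide X B := fun X hX =>
    sSameSide_of_rep hBnm (hX 1) (by simpa [hb0, hb1, hb2] using rep₂ b X)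
  have side3 : ∀ X : E, (∀ i, 0 < b.coord i X) → (line[ℝ, A, B]).SSameSide X C := fun X hX =>
    sSameSide_of_rep hCnm (hX 2) (by simpa [hb0, hb1, hb2] using rep₃ b X)
  -- signs for I and P
  obtain ⟨iB1, iB2, iC1, iC2, iA1, iA2, iBXC⟩ :=
    interior_signs hor (side1 I hIin) (side2 I hIin) (side3 I hIin)
  obtain ⟨pB1, pB2, pC1, pC2, pA1, pA2, pBXC⟩ :=
    interior_signs hor (side1 P hPin) (side2 P hPin) (side3 P hPin)
  -- distinctness
  have hInAB : I ∉ line[ℝ, A, B] := (side3 I hIin).left_notMem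
  have hInBC : I ∉ line[ℝ, B, C] := (side1 I hIin).left_notMem
  have hPnBC : P ∉ line[ℝ, B, C] := (side1 P hPin).left_notMem
  have hIA' : I ≠ A := fun h => hInAB (h ▸ left_mem_affineSpan_pair ℝ A B)
  have hIB' : I ≠ B := fun h => hInAB (h ▸ right_mem_affineSpan_pair ℝ A B)
  have hIC' : I ≠ C := fun h => hInBC (h ▸ right_mem_affineSpan_pair ℝ B C)
  have hAB : A ≠ B := by
    have := hABC.injective.ne (show (0 : Fin 3) ≠ 1 by decide); simpa using this
  have hCB : C ≠ B := by
    have := hABC.injective.ne (show (2 : Fin 3) ≠ 1 by decide); simpa using this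
  -- unoriented angle values
  set na := ∠ C A B with hna
  set nb := ∠ A B C with hnb
  set nc := ∠ B C A with hnc
  have hCA : C ≠ A := by
    have := hABC.injective.ne (show (2 : Fin 3) ≠ 0 by decide); simpa using this
  have hsum : nb + nc + na = π := angle_add_angle_add_angle_eq_pi C hAB.symm
  have hs2 : (∡ B C A).sign = 1 := by rw [oangle_rotate_sign]; exact hor
  have hs1 : (∡ C A B).sign = 1 := by rw [oangle_rotate_sign]; exact hs2
  obtain ⟨hnb0, hnbp⟩ := angle_bounds (p := A) (q := B) (r := C) (by rw [hor]; decide)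
  obtain ⟨hnc0, hncp⟩ := angle_bounds (p := B) (q := C) (r := A) (by rw [hs2]; decide)
  obtain ⟨hna0, hnap⟩ := angle_bounds (p := C) (q := A) (r := B) (by rw [hs1]; decide)
  -- angle decompositions
  have hi_b : ∠ A B I + ∠ I B C = nb := angle_add_of_signs iB1 iB2 hor
  have hi_c : ∠ B C I + ∠ I C A = nc := angle_add_of_signs iC1 iC2 hs2
  have hi_a : ∠ C A I + ∠ I A B = na := angle_add_of_signs iA1 iA2 hs1
  have hp_b : ∠ A B P + ∠ P B C = nb := angle_add_of_signs pB1 pB2 hor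
  have hp_c : ∠ B C P + ∠ P C A = nc := angle_add_of_signs pC1 pC2 hs2
  have hABI : ∠ A B I = nb / 2 := by rw [hIB] at hi_b ⊢; linarith
  have hIBC : ∠ I B C = nb / 2 := by rw [← hIB]; exact hABI
  have hBCI : ∠ B C I = nc / 2 := by rw [hIC] at hi_c ⊢; linarith
  have hICA : ∠ I C A = nc / 2 := by rw [← hIC]; exact hBCI
  have hIAB : ∠ I A B = na / 2 := by
    rw [angle_comm C A I, ← hIA, angle_comm B A I] at hi_a; linarith
  -- the key angle condition
  have hPB : P ≠ B := fun h => hPnBC (h ▸ left_mem_affineSpan_pair ℝ B C)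
  have hPC : P ≠ C := fun h => hPnBC (h ▸ right_mem_affineSpan_pair ℝ B C)
  have hkey : ∠ P B C + ∠ B C P = nb / 2 + nc / 2 := by
    rw [angle_comm P B A, angle_comm P C B] at hang
    linarith
  have hBIC : ∠ B I C = π - (nb / 2 + nc / 2) := by
    have h := angle_add_angle_add_angle_eq_pi B hIC'.symm
    rw [angle_comm I C B, angle_comm C B I, hBCI, hIBC] at h
    linarith
  have hBPC : ∠ B P C = π - (nb / 2 + nc / 2) := by
    have h := angle_add_angle_add_angle_eq_pi B hPC.symm
    rw [angle_comm P C B, angle_comm C B P] at h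
    linarith
  -- P lies on the circumcircle of B I C
  have hoeq : ∡ B P C = ∡ B I C :=
    oangle_eq_of_angle_eq_of_sign_eq (by rw [hBPC, hBIC]) (by rw [pBXC, iBXC])
  have hncolBIC : ¬Collinear ℝ ({B, I, C} : Set E) := fun h => by
    have h0 : (∡ B I C).sign = 0 := oangle_sign_eq_zero_iff_collinear.mpr h
    rw [iBXC] at h0; exact absurd h0 (by decide)
  let t : Triangle ℝ E := ⟨![B, I, C], affineIndependent_iff_not_collinear_set.mpr hncolBIC⟩
  have htp0 : t.points 0 = B := rfl
  have htp1 : t.points 1 = I := rfl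
  have htp2 : t.points 2 = C := rfl
  have hImem : I ∈ t.circumsphere := by rw [← htp1]; exact t.mem_circumsphere 1
  have hBmem : B ∈ t.circumsphere := by rw [← htp0]; exact t.mem_circumsphere 0
  have hCmem : C ∈ t.circumsphere := by rw [← htp2]; exact t.mem_circumsphere 2
  have hPmem : P ∈ t.circumsphere := by
    refine t.mem_circumsphere_of_two_zsmul_oangle_eq (i₁ := 0) (i₂ := 1) (i₃ := 2)
      (by decide) (by decide) (by decide) ?_
    rw [htp0, htp1, htp2, hoeq]
  obtain ⟨S, hBmem, hImem, hCmem, hPmem⟩ :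
      ∃ S : EuclideanGeometry.Sphere E, B ∈ S ∧ I ∈ S ∧ C ∈ S ∧ P ∈ S :=
    ⟨t.circumsphere, hBmem, hImem, hCmem, hPmem⟩
  set M := S.center with hMdef
  set r := S.radius with hrdef
  have hdB : dist B M = r := mem_sphere.mp hBmem
  have hdC : dist C M = r := mem_sphere.mp hCmem
  have hdI : dist I M = r := mem_sphere.mp hImem
  have hdP : dist P M = r := mem_sphere.mp hPmem
  have hrpos : 0 < r := by
    rcases eq_or_lt_of_le (dist_nonneg.trans_eq hdB) with h | h
    · exfalso
      have hB : B = M := by rw [← dist_eq_zero, hdB, ← h]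
      have hC : C = M := by rw [← dist_eq_zero, hdC, ← h]
      exact hCB (hC.trans hB.symm)
    · exact h
  have hMI : M ≠ I := fun h => by rw [h, dist_self] at hdI; exact hrpos.ne hdI
  -- the key Real.Angle computation: A, I, M are collinear
  have hval_BCI : ∡ B C I = ((nc / 2 : ℝ) : Real.Angle) := by
    rw [oangle_eq_angle_of_sign_eq_one iC1, hBCI]
  have h1 : ∡ B M I = ((nc : ℝ) : Real.Angle) := by
    rw [Sphere.oangle_center_eq_two_zsmul_oangle hBmem hCmem hImem hCB hIC'.symm,
      hval_BCI, two_zsmul_half_coe]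
  have h2 := Sphere.oangle_eq_pi_sub_two_zsmul_oangle_center_left hBmem hImem hIB'.symm
  rw [h1] at h2
  have h2' : (2 : ℤ) • ∡ M I B = (↑π - ↑nc : Real.Angle) := by
    rw [eq_sub_iff_add_eq] at h2 ⊢
    rw [add_comm]; exact h2
  have h3 := oangle_add_oangle_add_oangle_eq_pi hIA' hIB'.symm hAB
  have hIBAv : ∡ I B A = -((nb / 2 : ℝ) : Real.Angle) := by
    rw [oangle_rev A B I, oangle_eq_angle_of_sign_eq_one iB1, hABI]
  have hBAIv : ∡ B A I = -((na / 2 : ℝ) : Real.Angle) := by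
    rw [oangle_rev I A B, oangle_eq_angle_of_sign_eq_one iA2, hIAB]
  have hAIBv : ∡ A I B = ↑π + ((nb / 2 : ℝ) : Real.Angle) + ((na / 2 : ℝ) : Real.Angle) := by
    rw [hIBAv, hBAIv] at h3
    rw [← h3]; abel
  have h4 : ∡ A I B + ∡ B I M = ∡ A I M := oangle_add hIA'.symm hIB'.symm hMI
  have htw : (2 : ℤ) • ∡ A I M = 0 := by
    rw [← h4, smul_add, hAIBv, oangle_rev M I B, smul_neg, h2', smul_add, smul_add,
      Real.Angle.two_zsmul_coe_pi, two_zsmul_half_coe, two_zsmul_half_coe, zero_add, neg_sub,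
      ← Real.Angle.coe_sub, ← Real.Angle.coe_add, ← Real.Angle.coe_add,
      show nb + na + (nc - π) = 0 by linarith, Real.Angle.coe_zero]
  rcases Real.Angle.two_zsmul_eq_zero_iff.mp htw with h0 | hpi
  · -- ∡ A I M = 0 : impossible, M is on the other side of BC
    exfalso
    have hδv : ∡ B I C = -(((π - (nb / 2 + nc / 2)) : ℝ) : Real.Angle) := by
      rw [oangle_eq_neg_angle_of_sign_eq_neg_one iBXC, hBIC]
    have hBMC : ∡ B M C = ((nb + nc : ℝ) : Real.Angle) := by
      rw [Sphere.oangle_center_eq_two_zsmul_oangle hBmem hImem hCmem hIB' hIC', hδv, two_zsmul,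
        ← Real.Angle.coe_neg, ← Real.Angle.coe_add]
      exact Real.Angle.angle_eq_iff_two_pi_dvd_sub.mpr ⟨-1, by push_cast; ring⟩
    have hsBMC : (∡ B M C).sign = 1 := by
      rw [hBMC, Real.Angle.sign, Real.Angle.sin_coe]
      exact sign_pos (Real.sin_pos_of_pos_of_lt_pi (by linarith) (by linarith))
    have hμM : b.coord 0 M ≤ 0 := by
      by_contra hpos
      push_neg at hpos
      have hside : (line[ℝ, B, C]).SSameSide M A :=
        sSameSide_of_rep hAnm hpos (by simpa [hb0, hb1, hb2] using rep₁ b M)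
      have heq := sign_eq_of_sSameSide (p₁ := B) (p₂ := C) hside
      have hBAC : (∡ B A C).sign = -1 := by rw [← oangle_swap₁₃_sign C A B, hs1]
      rw [hsBMC, hBAC] at heq
      exact absurd heq (by decide)
    have hcA : b.coord 0 A = 1 := by
      rw [← hb0, b.coord_apply]; simp
    have hIlt1 : b.coord 0 I < 1 := by
      have hsc := b.sum_coord_apply_eq_one I
      rw [Fin.sum_univ_three] at hsc
      have h1' := hIin 1
      have h2'' := hIin 2
      linarith
    have hI0 : 0 < b.coord 0 I := hIin 0
    rcases oangle_eq_zero_iff_wbtw.mp h0 with hw | hw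
    · -- Wbtw I A M : A between I and M
      obtain ⟨u, hu01, huA⟩ := hw
      have hc := congrArg (b.coord 0) huA
      rw [AffineMap.apply_lineMap] at hc
      simp only [AffineMap.lineMap_apply, vsub_eq_sub, vadd_eq_add, smul_eq_mul, hcA] at hc
      obtain ⟨hu0, hu1⟩ := hu01
      clear * - hI0 hIlt1 hμM hu0 hu1 hc
      nlinarith [hI0, mul_nonneg hu0 (by linarith : (0:ℝ) ≤ b.coord 0 I - b.coord 0 M)]
    · -- Wbtw I M A : M between I and A
      obtain ⟨u, hu01, huM⟩ := hw
      have hc := congrArg (b.coord 0) huM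
      rw [AffineMap.apply_lineMap] at hc
      simp only [AffineMap.lineMap_apply, vsub_eq_sub, vadd_eq_add, smul_eq_mul, hcA] at hc
      obtain ⟨hu0, hu1⟩ := hu01
      clear * - hI0 hIlt1 hμM hu0 hu1 hc
      nlinarith [hI0, mul_nonneg hu0 (by linarith : (0:ℝ) ≤ 1 - b.coord 0 I)]
  · -- main case : I is strictly between A and M
    have hS : Sbtw ℝ A I M := oangle_eq_pi_iff_sbtw.mp hpi
    have hd : dist A I + dist I M = dist A M := hS.wbtw.dist_add_dist
    have htri := dist_triangle A P M
    have hle : dist A I ≤ dist A P := by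
      rw [hdI] at hd; rw [hdP] at htri; linarith
    refine ⟨hle, ⟨fun heq => ?_, fun h => by rw [h]⟩⟩
    have h5 : dist A P + dist P M = dist A M := by
      rw [heq, hdP, ← hd, hdI]
    have hw2 : Wbtw ℝ A P M := dist_add_dist_eq_iff.mp h5
    obtain ⟨u, hu01, huP⟩ := hw2
    obtain ⟨v, hv01, hvI⟩ := hS.wbtw
    have hAM : dist A M ≠ 0 := by
      rw [hdI] at hd; intro hz; rw [hz] at hd; have := dist_nonneg (x := A) (y := I); linarith
    have hdu : dist A P = u * dist A M := by
      rw [← huP, dist_left_lineMap, Real.norm_eq_abs, abs_of_nonneg hu01.1]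
    have hdv : dist A I = v * dist A M := by
      rw [← hvI, dist_left_lineMap, Real.norm_eq_abs, abs_of_nonneg hv01.1]
    have huv : u = v := by
      have : u * dist A M = v * dist A M := by rw [← hdu, ← hdv, heq]
      exact mul_right_cancel₀ hAM this
    rw [← huP, ← hvI, huv]

end Imo2006P1Aux

open EuclideanGeometry


/-- IMO 2006 P1: `I` is the incenter of triangle `ABC` (characterized as the interior
point on all three internal angle bisectors) and `P` is an interior point with
`∠PBA + ∠PCA = ∠PBC + ∠PCB`.  Then `AP ≥ AI`, with equality iff `P = I`. -/
theorem imo2006_p1 (A B C I P : EuclideanSpace ℝ (Fin 2))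
    (hABC : AffineIndependent ℝ ![A, B, C])
    (hIin : I ∈ interior (convexHull ℝ ({A, B, C} : Set (EuclideanSpace ℝ (Fin 2)))))
    (hIA : ∠ B A I = ∠ I A C) (hIB : ∠ A B I = ∠ I B C) (hIC : ∠ B C I = ∠ I C A)
    (hPin : P ∈ interior (convexHull ℝ ({A, B, C} : Set (EuclideanSpace ℝ (Fin 2)))))
    (hang : ∠ P B A + ∠ P C A = ∠ P B C + ∠ P C B) :
    dist A I ≤ dist A P ∧ (dist A P = dist A I ↔ P = I) := by
  haveI hd2 : Fact (Module.finrank ℝ (EuclideanSpace ℝ (Fin 2)) = 2) :=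
    ⟨finrank_euclideanSpace_fin⟩
  haveI : Module.Oriented ℝ (EuclideanSpace ℝ (Fin 2)) (Fin 2) :=
    ⟨Module.Basis.orientation (Module.finBasisOfFinrankEq _ _ hd2.out)⟩
  have hncol : ¬Collinear ℝ ({A, B, C} : Set (EuclideanSpace ℝ (Fin 2))) :=
    affineIndependent_iff_not_collinear_set.mp hABC
  have hsign : (∡ A B C).sign ≠ 0 := fun h => hncol (oangle_sign_eq_zero_iff_collinear.mp h)
  cases h : (∡ A B C).sign with
  | zero => exact absurd h hsign
  | pos => exact Imo2006P1Aux.aux A B C I P hABC h hIin hIA hIB hIC hPin hang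
  | neg =>
    have hor : (∡ A C B).sign = 1 := by
      rw [← oangle_swap₂₃_sign A B C, h]; decide
    have hset : ({A, C, B} : Set (EuclideanSpace ℝ (Fin 2))) = {A, B, C} := by
      rw [Set.pair_comm C B]
    have hABC' : AffineIndependent ℝ ![A, C, B] :=
      affineIndependent_iff_not_collinear_set.mpr (by rwa [hset])
    exact Imo2006P1Aux.aux A C B I P hABC' hor (by rwa [hset])
      (by rw [angle_comm C A I, ← hIA, angle_comm B A I])
      (by rw [angle_comm A C I, ← hIC, angle_comm B C I])
      (by rw [angle_comm C B I, ← hIB, angle_comm A B I])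
      (by rwa [hset])
      (by linarith)
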